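/- Let φ be the standard normal density and define, for a > 0 and p ∈ [0,1], D(p,a) = sup_x |p·Φ(x−a) + (1−p)·Φ(x+a) − Φ_m(x)|, where Φ_m is the CDF of the moment-matched normal (mean (2p−1)a, variance 1+4p(1−p)a²). Then in the limit a → 0, the leading third-order coefficient of D in a is maximized over p at p = (3+√3)/6 (equivalently, at line ratio (3+√3):(3−√3)). -/

import Mathlib

open MeasureTheory Filter

/-- The standard normal cumulative distribution function. -/
noncomputable def stdNormalCDF (x : ℝ) : ℝ :=
  ∫ t in Set.Iic x, Real.exp (-t ^ 2 / 2) / Real.sqrt (2 * Real.pi)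

/-- Kolmogorov distance between the two-point mixture CDF (weights `p`, `1-p` at `±a`,
convolved with a unit Gaussian) and the moment-matched Gaussian CDF. -/
noncomputable def mixtureKSdist (p a : ℝ) : ℝ :=
  ⨆ x : ℝ, |p * stdNormalCDF (x - a) + (1 - p) * stdNormalCDF (x + a)
    - stdNormalCDF ((x - (2 * p - 1) * a) / Real.sqrt (1 + 4 * p * (1 - p) * a ^ 2))|

noncomputable section

noncomputable def gpdf (t : ℝ) : ℝ := Real.exp (-t ^ 2 / 2) / Real.sqrt (2 * Real.pi)

lemma gpdf_pos (t : ℝ) : 0 < gpdf t := by unfold gpdf; positivity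

lemma gpdf_cont : Continuous gpdf := by unfold gpdf; fun_prop

lemma gpdf_integrable : Integrable gpdf := by
  unfold gpdf
  apply Integrable.div_const
  have : ∀ t : ℝ, -t ^ 2 / 2 = -(1/2) * t ^ 2 := by intro t; ring
  simp_rw [this]
  exact integrable_exp_neg_mul_sq (by norm_num)

lemma gpdf_integral : ∫ t, gpdf t = 1 := by
  unfold gpdf
  rw [integral_div]
  have : ∀ t : ℝ, -t ^ 2 / 2 = -(1/2) * t ^ 2 := by intro t; ring
  simp_rw [this, integral_gaussian]
  rw [div_eq_one_iff_eq (by positivity)]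
  rw [show Real.pi / (1/2) = 2 * Real.pi by ring]

lemma hasDerivAt_gpdf (t : ℝ) : HasDerivAt gpdf (-t * gpdf t) t := by
  have h1 : HasDerivAt (fun u : ℝ => -u ^ 2 / 2) (-t) t := by
    have := (hasDerivAt_pow 2 t).neg.div_const 2
    refine this.congr_deriv ?_
    simp; ring
  have h : HasDerivAt (fun u : ℝ => Real.exp (-u ^ 2 / 2))
      (Real.exp (-t^2/2) * (-t)) t := (Real.hasDerivAt_exp _).comp t h1
  have := h.div_const (Real.sqrt (2 * Real.pi))
  unfold gpdf
  refine this.congr_deriv ?_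
  ring

lemma cdf_eq (y : ℝ) : stdNormalCDF y = stdNormalCDF 0 + ∫ t in (0:ℝ)..y, gpdf t := by
  have h := intervalIntegral.integral_Iic_sub_Iic
    (gpdf_integrable.integrableOn (s := Set.Iic 0)) (gpdf_integrable.integrableOn (s := Set.Iic y))
  unfold stdNormalCDF
  unfold gpdf at h ⊢
  linarith [h]

lemma hasDerivAt_cdf (x : ℝ) : HasDerivAt stdNormalCDF (gpdf x) x := by
  have h : HasDerivAt (fun y => stdNormalCDF 0 + ∫ t in (0:ℝ)..y, gpdf t) (gpdf x) x := by
    apply HasDerivAt.const_add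
    exact intervalIntegral.integral_hasDerivAt_right
      gpdf_integrable.intervalIntegrable
      (gpdf_cont.stronglyMeasurableAtFilter _ _) gpdf_cont.continuousAt
  exact h.congr_of_eventuallyEq (Eventually.of_forall fun y => cdf_eq y)

lemma cdf_nonneg (x : ℝ) : 0 ≤ stdNormalCDF x :=
  setIntegral_nonneg measurableSet_Iic (fun t _ => (gpdf_pos t).le)

lemma cdf_le_one (x : ℝ) : stdNormalCDF x ≤ 1 := by
  rw [show (1:ℝ) = ∫ t, gpdf t from gpdf_integral.symm]
  exact setIntegral_le_integral gpdf_integrable (Eventually.of_forall fun t => (gpdf_pos t).le)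



def bb (p : ℝ) : ℝ := 2*p-1
def cc (p : ℝ) : ℝ := 4*p*(1-p)
def sg (p a : ℝ) : ℝ := Real.sqrt (1 + cc p * a^2)
def uu (p x a : ℝ) : ℝ := x - bb p * a
def W0 (p x a : ℝ) : ℝ := uu p x a / sg p a
def W1 (p x a : ℝ) : ℝ := -(bb p)/sg p a - cc p * a * uu p x a/(sg p a)^3
def W2 (p x a : ℝ) : ℝ := (2*a*bb p*cc p - cc p*uu p x a)/(sg p a)^3
  + 3*(cc p)^2*a^2*uu p x a/(sg p a)^5
def W3 (p x a : ℝ) : ℝ := 3*bb p*cc p/(sg p a)^3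
  + (9*(cc p)^2*a*uu p x a - 9*a^2*bb p*(cc p)^2)/(sg p a)^5
  - 15*(cc p)^3*a^3*uu p x a/(sg p a)^7
def W4 (p x a : ℝ) : ℝ := (9*(cc p)^2*uu p x a - 36*a*bb p*(cc p)^2)/(sg p a)^5
  + (60*bb p*(cc p)^3*a^3 - 90*(cc p)^3*a^2*uu p x a)/(sg p a)^7
  + 105*(cc p)^4*a^4*uu p x a/(sg p a)^9

variable {p x : ℝ}

lemma cc_nonneg (hp : p ∈ Set.Icc (0:ℝ) 1) : 0 ≤ cc p := by
  obtain ⟨h0, h1⟩ := hp; unfold cc; nlinarith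

lemma cc_le_one (hp : p ∈ Set.Icc (0:ℝ) 1) : cc p ≤ 1 := by
  obtain ⟨h0, h1⟩ := hp; unfold cc; nlinarith [sq_nonneg (2*p-1)]

lemma bb_abs_le (hp : p ∈ Set.Icc (0:ℝ) 1) : |bb p| ≤ 1 := by
  obtain ⟨h0, h1⟩ := hp; unfold bb; rw [abs_le]; constructor <;> linarith

lemma s_pos (hc : 0 ≤ cc p) (a : ℝ) : (0:ℝ) < 1 + cc p * a^2 := by nlinarith [sq_nonneg a]

lemma sg_pos (hc : 0 ≤ cc p) (a : ℝ) : 0 < sg p a := Real.sqrt_pos.2 (s_pos hc a)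

lemma sg_one_le (hc : 0 ≤ cc p) (a : ℝ) : 1 ≤ sg p a := by
  rw [show (1:ℝ) = Real.sqrt 1 by simp]
  exact Real.sqrt_le_sqrt (by nlinarith [sq_nonneg a])

lemma sg_sq (hc : 0 ≤ cc p) (a : ℝ) : (sg p a)^2 = 1 + cc p * a^2 :=
  Real.sq_sqrt (s_pos hc a).le

lemma hasDerivAt_sg (hc : 0 ≤ cc p) (a : ℝ) :
    HasDerivAt (fun a => sg p a) (cc p * a / sg p a) a := by
  have h1 : HasDerivAt (fun a : ℝ => 1 + cc p * a^2) (cc p * (2*a)) a := by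
    simpa using ((hasDerivAt_pow 2 a).const_mul (cc p)).const_add 1
  have := (Real.hasDerivAt_sqrt (ne_of_gt (s_pos hc a))).comp a h1
  unfold sg
  refine this.congr_deriv ?_
  rw [show Real.sqrt (1 + cc p * a^2) = sg p a from rfl]
  field_simp

lemma hasDerivAt_W0 (hc : 0 ≤ cc p) (a : ℝ) :
    HasDerivAt (fun a => W0 p x a) (W1 p x a) a := by
  have hu : HasDerivAt (fun a => uu p x a) (-(bb p)) a := by
    unfold uu
    simpa using ((hasDerivAt_id a).const_mul (bb p)).const_sub x
  have := hu.div (hasDerivAt_sg hc a) (ne_of_gt (sg_pos hc a))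
  refine this.congr_deriv ?_
  unfold W1
  have h := ne_of_gt (sg_pos hc a)
  field_simp

lemma hasDerivAt_frac (hc : 0 ≤ cc p) (a : ℝ) (P : ℝ → ℝ) (P' : ℝ) (k : ℕ)
    (hP : HasDerivAt P P' a) :
    HasDerivAt (fun a => P a / (sg p a)^(k+1))
      ((P' * (sg p a)^2 - (k+1) * P a * (cc p * a)) / (sg p a)^(k+3)) a := by
  have hσ := ne_of_gt (sg_pos hc a)
  have := hP.div ((hasDerivAt_sg hc a).pow (k+1)) (pow_ne_zero (k+1) hσ)
  refine this.congr_deriv ?_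
  simp only [Pi.pow_apply, Pi.mul_apply, Pi.sub_apply, Pi.add_apply, id_eq, Function.comp_apply, Nat.add_sub_cancel, Nat.cast_add, Nat.cast_one, Nat.cast_ofNat]
  field_simp
  ring

variable (p x) in
lemma hasDerivAt_uu (a : ℝ) : HasDerivAt (fun a => uu p x a) (-(bb p)) a := by
  unfold uu
  simpa using ((hasDerivAt_id a).const_mul (bb p)).const_sub x

lemma hasDerivAt_W1 (hc : 0 ≤ cc p) (a : ℝ) :
    HasDerivAt (fun a => W1 p x a) (W2 p x a) a := by
  have hσ := ne_of_gt (sg_pos hc a)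
  have h1 := hasDerivAt_frac hc a (fun _ => -(bb p)) 0 0 (hasDerivAt_const a (-(bb p)))
  have h2 := hasDerivAt_frac hc a _ _ 2
    (((hasDerivAt_id a).const_mul (cc p)).mul (hasDerivAt_uu p x a))
  have H := h1.sub h2
  have heq : (fun a => W1 p x a) =
      (fun a => (fun _ => -(bb p)) a / (sg p a)^(0+1) -
        (fun a => cc p * a * uu p x a) a / (sg p a)^(2+1)) := by
    funext a; unfold W1; ring
  rw [heq]
  refine H.congr_deriv ?_
  simp only [Pi.pow_apply, Pi.mul_apply, Pi.sub_apply, Pi.add_apply, id_eq, Function.comp_apply, Nat.add_sub_cancel, Nat.cast_add, Nat.cast_one, Nat.cast_ofNat]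
  unfold W2
  field_simp
  ring

lemma hasDerivAt_W2 (hc : 0 ≤ cc p) (a : ℝ) :
    HasDerivAt (fun a => W2 p x a) (W3 p x a) a := by
  have hσ := ne_of_gt (sg_pos hc a)
  have h1 := hasDerivAt_frac hc a _ _ 2
    ((((hasDerivAt_id a).const_mul (2*bb p*cc p)).sub ((hasDerivAt_uu p x a).const_mul (cc p))))
  have h2 := hasDerivAt_frac hc a _ _ 4
    (((hasDerivAt_pow 2 a).const_mul (3*(cc p)^2)).mul (hasDerivAt_uu p x a))
  have H := h1.add h2
  have heq : (fun a => W2 p x a) =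
      (fun a => (fun a => 2*bb p*cc p * a - cc p * uu p x a) a / (sg p a)^(2+1) +
        (fun a => 3*(cc p)^2 * a^2 * uu p x a) a / (sg p a)^(4+1)) := by
    funext a; unfold W2; ring
  rw [heq]
  refine H.congr_deriv ?_
  simp only [Pi.pow_apply, Pi.mul_apply, Pi.sub_apply, Pi.add_apply, id_eq, Function.comp_apply, Nat.add_sub_cancel, Nat.cast_add, Nat.cast_one, Nat.cast_ofNat]
  unfold W3
  field_simp
  ring

lemma hasDerivAt_W3 (hc : 0 ≤ cc p) (a : ℝ) :
    HasDerivAt (fun a => W3 p x a) (W4 p x a) a := by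
  have hσ := ne_of_gt (sg_pos hc a)
  have h1 := hasDerivAt_frac hc a (fun _ => 3*bb p*cc p) 0 2 (hasDerivAt_const a _)
  have h2 := hasDerivAt_frac hc a _ _ 4
    ((((hasDerivAt_id a).const_mul (9*(cc p)^2)).mul (hasDerivAt_uu p x a)).sub
      ((hasDerivAt_pow 2 a).const_mul (9*bb p*(cc p)^2)))
  have h3 := hasDerivAt_frac hc a _ _ 6
    (((hasDerivAt_pow 3 a).const_mul (15*(cc p)^3)).mul (hasDerivAt_uu p x a))
  have H := (h1.add h2).sub h3
  have heq : (fun a => W3 p x a) =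
      (fun a => ((fun _ => 3*bb p*cc p) a / (sg p a)^(2+1) +
        (fun a => 9*(cc p)^2*a*uu p x a - 9*bb p*(cc p)^2*a^2) a / (sg p a)^(4+1)) -
        (fun a => 15*(cc p)^3*a^3*uu p x a) a / (sg p a)^(6+1)) := by
    funext a; unfold W3; ring
  rw [heq]
  refine H.congr_deriv ?_
  simp only [Pi.pow_apply, Pi.mul_apply, Pi.sub_apply, Pi.add_apply, id_eq, Function.comp_apply, Nat.add_sub_cancel, Nat.cast_add, Nat.cast_one, Nat.cast_ofNat]
  unfold W4
  field_simp
  ring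


def FF (p x a : ℝ) : ℝ := p * stdNormalCDF (x-a) + (1-p) * stdNormalCDF (x+a)
  - stdNormalCDF (W0 p x a)
def F1 (p x a : ℝ) : ℝ := -(p * gpdf (x-a)) + (1-p) * gpdf (x+a) - gpdf (W0 p x a) * W1 p x a
def F2 (p x a : ℝ) : ℝ := -(p*(x-a)*gpdf (x-a)) - (1-p)*(x+a)*gpdf (x+a)
  + W0 p x a * gpdf (W0 p x a) * (W1 p x a)^2 - gpdf (W0 p x a) * W2 p x a
def F3 (p x a : ℝ) : ℝ := -(p*((x-a)^2-1)*gpdf (x-a)) + (1-p)*((x+a)^2-1)*gpdf (x+a)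
  - ((W0 p x a)^2-1)*gpdf (W0 p x a)*(W1 p x a)^3
  + 3*W0 p x a*gpdf (W0 p x a)*W1 p x a*W2 p x a - gpdf (W0 p x a)*W3 p x a
def F4 (p x a : ℝ) : ℝ := -(p*(x-a)*((x-a)^2-3)*gpdf (x-a)) - (1-p)*(x+a)*((x+a)^2-3)*gpdf (x+a)
  - ((3*W0 p x a - (W0 p x a)^3)*gpdf (W0 p x a)*(W1 p x a)^4
    + 6*((W0 p x a)^2-1)*gpdf (W0 p x a)*(W1 p x a)^2*W2 p x a
    - 3*W0 p x a*gpdf (W0 p x a)*(W2 p x a)^2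
    - 4*W0 p x a*gpdf (W0 p x a)*W1 p x a*W3 p x a
    + gpdf (W0 p x a)*W4 p x a)

lemma hasDerivAt_xsub (x a : ℝ) : HasDerivAt (fun a : ℝ => x - a) (-1) a := by
  simpa using (hasDerivAt_id a).const_sub x

lemma hasDerivAt_xadd (x a : ℝ) : HasDerivAt (fun a : ℝ => x + a) 1 a := by
  simpa using (hasDerivAt_id a).const_add x

lemma hasDerivAt_FF (hc : 0 ≤ cc p) (a : ℝ) :
    HasDerivAt (fun a => FF p x a) (F1 p x a) a := by
  have h1 := ((hasDerivAt_cdf (x-a)).comp a (hasDerivAt_xsub x a)).const_mul p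
  have h2 := ((hasDerivAt_cdf (x+a)).comp a (hasDerivAt_xadd x a)).const_mul (1-p)
  have h3 := (hasDerivAt_cdf (W0 p x a)).comp a (hasDerivAt_W0 hc a)
  have H := (h1.add h2).sub h3
  unfold FF F1
  refine H.congr_deriv ?_
  try simp only [Function.comp_apply]
  ring

lemma hasDerivAt_F1 (hc : 0 ≤ cc p) (a : ℝ) :
    HasDerivAt (fun a => F1 p x a) (F2 p x a) a := by
  have h1 := ((hasDerivAt_gpdf (x-a)).comp a (hasDerivAt_xsub x a)).const_mul p
  have h2 := ((hasDerivAt_gpdf (x+a)).comp a (hasDerivAt_xadd x a)).const_mul (1-p)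
  have h3 := ((hasDerivAt_gpdf (W0 p x a)).comp a (hasDerivAt_W0 hc a)).mul (hasDerivAt_W1 (x := x) hc a)
  have H := ((h1.neg.add h2).sub h3 : HasDerivAt
    (fun a => -(p * gpdf (x-a)) + (1-p) * gpdf (x+a) - gpdf (W0 p x a) * W1 p x a) _ a)
  unfold F1 F2
  refine H.congr_deriv ?_
  try simp only [Function.comp_apply]
  ring

lemma hasDerivAt_F2 (hc : 0 ≤ cc p) (a : ℝ) :
    HasDerivAt (fun a => F2 p x a) (F3 p x a) a := by
  have hg := (hasDerivAt_gpdf (W0 p x a)).comp a (hasDerivAt_W0 hc a)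
  have h1 := (((hasDerivAt_xsub x a).const_mul p).mul
    ((hasDerivAt_gpdf (x-a)).comp a (hasDerivAt_xsub x a)))
  have h2 := (((hasDerivAt_xadd x a).const_mul (1-p)).mul
    ((hasDerivAt_gpdf (x+a)).comp a (hasDerivAt_xadd x a)))
  have h3 := (((hasDerivAt_W0 hc a (x := x)).mul hg).mul ((hasDerivAt_W1 (x := x) hc a).pow 2))
  have h4 := hg.mul (hasDerivAt_W2 (x := x) hc a)
  have H := ((h1.neg.sub h2).add h3).sub h4
  unfold F2 F3
  refine H.congr_deriv ?_
  simp only [Pi.pow_apply, Pi.mul_apply, Pi.sub_apply, Pi.add_apply, id_eq, Function.comp_apply, Nat.add_sub_cancel, Nat.cast_add, Nat.cast_one, Nat.cast_ofNat]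
  ring

lemma hasDerivAt_F3 (hc : 0 ≤ cc p) (a : ℝ) :
    HasDerivAt (fun a => F3 p x a) (F4 p x a) a := by
  have hg := (hasDerivAt_gpdf (W0 p x a)).comp a (hasDerivAt_W0 hc a)
  have hw0 := hasDerivAt_W0 (x := x) hc a
  have h1 := ((((hasDerivAt_xsub x a).pow 2).sub_const 1).const_mul p).mul
    ((hasDerivAt_gpdf (x-a)).comp a (hasDerivAt_xsub x a))
  have h2 := ((((hasDerivAt_xadd x a).pow 2).sub_const 1).const_mul (1-p)).mul
    ((hasDerivAt_gpdf (x+a)).comp a (hasDerivAt_xadd x a))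
  have h3 := (((hw0.pow 2).sub_const 1).mul hg).mul ((hasDerivAt_W1 (x := x) hc a).pow 3)
  have h4 := (((hw0.const_mul 3).mul hg).mul (hasDerivAt_W1 (x := x) hc a)).mul (hasDerivAt_W2 (x := x) hc a)
  have h5 := hg.mul (hasDerivAt_W3 (x := x) hc a)
  have H := (((h1.neg.add h2).sub h3).add h4).sub h5
  unfold F3 F4
  refine H.congr_deriv ?_
  simp only [Pi.pow_apply, Pi.mul_apply, Pi.sub_apply, Pi.add_apply, id_eq, Function.comp_apply, Nat.add_sub_cancel, Nat.cast_add, Nat.cast_one, Nat.cast_ofNat]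
  ring

lemma sg_zero : sg p 0 = 1 := by unfold sg; norm_num

lemma W0_zero : W0 p x 0 = x := by unfold W0 uu; rw [sg_zero]; norm_num

lemma FF_zero : FF p x 0 = 0 := by unfold FF; rw [W0_zero]; norm_num; ring

lemma F1_zero : F1 p x 0 = 0 := by
  unfold F1 W1; rw [W0_zero, sg_zero]; norm_num; unfold bb; ring

lemma F2_zero : F2 p x 0 = 0 := by
  unfold F2 W1 W2 uu; rw [W0_zero, sg_zero]; norm_num; unfold bb cc; ring

lemma F3_zero : F3 p x 0 = 8*p*(1-p)*(2*p-1)*((x^2-1)*gpdf x) := by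
  unfold F3 W1 W2 W3 uu; rw [W0_zero, sg_zero]; norm_num; unfold bb cc; ring

lemma exp_poly_bound (t : ℝ) (k : ℕ) (hk : k ≤ 8) : |t|^k * Real.exp (-t^2/2) ≤ 4096 := by
  have h1 : |t|^k ≤ 1 + t^8 := by
    rcases le_or_gt (|t|) 1 with h | h
    · have : |t|^k ≤ 1 := pow_le_one₀ (abs_nonneg t) h
      nlinarith [pow_nonneg (sq_nonneg t) 4, sq_abs t]
    · have h2 : |t|^k ≤ |t|^8 := pow_le_pow_right₀ h.le hk
      have h3 : |t|^8 = t^8 := by rw [← abs_pow]; exact abs_of_nonneg (by positivity)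
      nlinarith
  have h2 : (1 + t^2/8)^4 ≤ Real.exp (t^2/2) := by
    have := Real.add_one_le_exp (t^2/8)
    calc (1 + t^2/8)^4 ≤ (Real.exp (t^2/8))^4 := by
          apply pow_le_pow_left₀ (by positivity) (by linarith)
      _ = Real.exp (t^2/2) := by rw [← Real.exp_nat_mul]; ring_nf
  have h3 : 1 + t^8 ≤ 4096 * Real.exp (t^2/2) := by
    nlinarith [sq_nonneg t, pow_nonneg (sq_nonneg t) 2, pow_nonneg (sq_nonneg t) 3,
      sq_nonneg (t^2), sq_nonneg (t^4)]
  have h4 : Real.exp (-t^2/2) = 1 / Real.exp (t^2/2) := by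
    rw [neg_div, Real.exp_neg]; rw [inv_eq_one_div]
  have h5 : 0 < Real.exp (t^2/2) := Real.exp_pos _
  calc |t|^k * Real.exp (-t^2/2) ≤ (1 + t^8) * Real.exp (-t^2/2) := by
        apply mul_le_mul_of_nonneg_right h1 (Real.exp_pos _).le
    _ = (1 + t^8) / Real.exp (t^2/2) := by rw [h4]; ring
    _ ≤ 4096 := by rw [div_le_iff₀ h5]; linarith

lemma sqrt_two_pi_ge : (2:ℝ) ≤ Real.sqrt (2*Real.pi) := by
  have h4 : (4:ℝ) ≤ 2 * Real.pi := by nlinarith [Real.pi_gt_three]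
  calc (2:ℝ) = Real.sqrt 4 := by
        rw [show (4:ℝ) = 2^2 by norm_num, Real.sqrt_sq (by norm_num)]
    _ ≤ Real.sqrt (2*Real.pi) := Real.sqrt_le_sqrt h4

lemma gpdf_poly_bound (t : ℝ) (k : ℕ) (hk : k ≤ 8) : |t|^k * gpdf t ≤ 2048 := by
  have h := exp_poly_bound t k hk
  unfold gpdf
  have h2 := sqrt_two_pi_ge
  have h3 : |t|^k * (Real.exp (-t^2/2) / Real.sqrt (2*Real.pi))
      ≤ |t|^k * Real.exp (-t^2/2) / 2 := by
    rw [← mul_div_assoc]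
    apply div_le_div_of_nonneg_left ?_ (by norm_num) h2
    positivity
  linarith

lemma frac_bound {n d B : ℝ} (hn : |n| ≤ B) (hd : 1 ≤ d) : |n / d| ≤ B := by
  have hd0 : (0:ℝ) < d := lt_of_lt_of_le one_pos hd
  rw [abs_div, abs_of_pos hd0, div_le_iff₀ hd0]
  nlinarith [abs_nonneg n]

section Wbounds

variable {p x a : ℝ}

lemma abs_sub_le' (A B : ℝ) : |A - B| ≤ |A| + |B| := by
  have := abs_add_le A (-B); simpa [sub_eq_add_neg] using this

lemma unit_prod {u v : ℝ} (hu0 : 0 ≤ u) (hu1 : u ≤ 1) (hv0 : 0 ≤ v) (hv1 : v ≤ 1) :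
    0 ≤ u*v ∧ u*v ≤ 1 :=
  ⟨mul_nonneg hu0 hv0, mul_le_one₀ hu1 hv0 hv1⟩

lemma W1_eq (hc : 0 ≤ cc p) :
    W1 p x a = -(bb p)/sg p a - cc p * a * W0 p x a/(sg p a)^2 := by
  have hσ := ne_of_gt (sg_pos hc a); unfold W1 W0 uu; field_simp

lemma W2_eq (hc : 0 ≤ cc p) :
    W2 p x a = 2*bb p*cc p*a/(sg p a)^3 - cc p*W0 p x a/(sg p a)^2
      + 3*(cc p)^2*a^2*W0 p x a/(sg p a)^4 := by
  have hσ := ne_of_gt (sg_pos hc a); unfold W2 W0 uu; field_simp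

lemma W3_eq (hc : 0 ≤ cc p) :
    W3 p x a = 3*bb p*cc p/(sg p a)^3 - 9*bb p*(cc p)^2*a^2/(sg p a)^5
      + 9*(cc p)^2*a*W0 p x a/(sg p a)^4 - 15*(cc p)^3*a^3*W0 p x a/(sg p a)^6 := by
  have hσ := ne_of_gt (sg_pos hc a); unfold W3 W0 uu; field_simp; ring

lemma W4_eq (hc : 0 ≤ cc p) :
    W4 p x a = -(36*bb p*(cc p)^2*a)/(sg p a)^5 + 60*bb p*(cc p)^3*a^3/(sg p a)^7
      + 9*(cc p)^2*W0 p x a/(sg p a)^4 - 90*(cc p)^3*a^2*W0 p x a/(sg p a)^6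
      + 105*(cc p)^4*a^4*W0 p x a/(sg p a)^8 := by
  have hσ := ne_of_gt (sg_pos hc a); unfold W4 W0 uu; field_simp; ring

variable (hp : p ∈ Set.Icc (0:ℝ) 1) (ha : a ∈ Set.Icc (0:ℝ) 1)
include hp ha

lemma W1_bound : |W1 p x a| ≤ 1 + |W0 p x a| := by
  have hb := bb_abs_le hp; have hc0 := cc_nonneg hp; have hc1 := cc_le_one hp
  obtain ⟨ha0, ha1⟩ := ha
  have hs1 := sg_one_le hc0 a
  have hm : (0:ℝ) ≤ |W0 p x a| := abs_nonneg _
  rw [W1_eq hc0]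
  have t1 : |-(bb p)/sg p a| ≤ 1 := frac_bound (by simpa using hb) hs1
  have t2 : |cc p * a * W0 p x a/(sg p a)^2| ≤ |W0 p x a| := by
    apply frac_bound ?_ (one_le_pow₀ hs1)
    rw [abs_mul, abs_mul, abs_of_nonneg hc0, abs_of_nonneg ha0]
    obtain ⟨q0, q1⟩ := unit_prod hc0 hc1 ha0 ha1
    nlinarith
  refine le_trans (abs_sub_le' _ _) ?_
  linarith

lemma W2_bound : |W2 p x a| ≤ 2 + 4*|W0 p x a| := by
  have hb := bb_abs_le hp; have hc0 := cc_nonneg hp; have hc1 := cc_le_one hp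
  obtain ⟨ha0, ha1⟩ := ha
  have hs1 := sg_one_le hc0 a
  have hm : (0:ℝ) ≤ |W0 p x a| := abs_nonneg _
  rw [W2_eq hc0]
  have t1 : |2*bb p*cc p*a/(sg p a)^3| ≤ 2 := by
    apply frac_bound ?_ (one_le_pow₀ hs1)
    rw [abs_mul, abs_mul, abs_mul, abs_of_nonneg hc0, abs_of_nonneg ha0]
    rw [show |(2:ℝ)| = 2 from abs_of_nonneg (by norm_num)]
    obtain ⟨q0, q1⟩ := unit_prod (abs_nonneg (bb p)) hb hc0 hc1
    obtain ⟨r0, r1⟩ := unit_prod q0 q1 ha0 ha1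
    linarith
  have t2 : |cc p*W0 p x a/(sg p a)^2| ≤ |W0 p x a| := by
    apply frac_bound ?_ (one_le_pow₀ hs1)
    rw [abs_mul, abs_of_nonneg hc0]
    nlinarith
  have t3 : |3*(cc p)^2*a^2*W0 p x a/(sg p a)^4| ≤ 3*|W0 p x a| := by
    apply frac_bound ?_ (one_le_pow₀ hs1)
    rw [abs_mul, abs_mul, abs_mul, abs_of_nonneg (sq_nonneg (cc p)),
      abs_of_nonneg (sq_nonneg a)]
    rw [show |(3:ℝ)| = 3 from abs_of_nonneg (by norm_num)]
    obtain ⟨q0, q1⟩ := unit_prod (sq_nonneg (cc p)) (pow_le_one₀ hc0 hc1)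
      (sq_nonneg a) (pow_le_one₀ ha0 ha1)
    nlinarith
  refine le_trans (abs_add_le _ _) ?_
  refine le_trans (add_le_add_left (abs_sub_le' _ _) _) ?_
  linarith

lemma W3_bound : |W3 p x a| ≤ 12 + 24*|W0 p x a| := by
  have hb := bb_abs_le hp; have hc0 := cc_nonneg hp; have hc1 := cc_le_one hp
  obtain ⟨ha0, ha1⟩ := ha
  have hs1 := sg_one_le hc0 a
  have hm : (0:ℝ) ≤ |W0 p x a| := abs_nonneg _
  have hcp : ∀ k : ℕ, (cc p)^k ≤ 1 := fun k => pow_le_one₀ hc0 hc1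
  have hap : ∀ k : ℕ, a^k ≤ 1 := fun k => pow_le_one₀ ha0 ha1
  have hcn : ∀ k : ℕ, (0:ℝ) ≤ (cc p)^k := fun k => pow_nonneg hc0 k
  have han : ∀ k : ℕ, (0:ℝ) ≤ a^k := fun k => pow_nonneg ha0 k
  rw [W3_eq hc0]
  have t1 : |3*bb p*cc p/(sg p a)^3| ≤ 3 := by
    apply frac_bound ?_ (one_le_pow₀ hs1)
    rw [abs_mul, abs_mul, abs_of_nonneg hc0,
      show |(3:ℝ)| = 3 from abs_of_nonneg (by norm_num)]
    obtain ⟨q0, q1⟩ := unit_prod (abs_nonneg (bb p)) hb hc0 hc1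
    linarith
  have t2 : |9*bb p*(cc p)^2*a^2/(sg p a)^5| ≤ 9 := by
    apply frac_bound ?_ (one_le_pow₀ hs1)
    rw [abs_mul, abs_mul, abs_mul, abs_of_nonneg (hcn 2), abs_of_nonneg (han 2),
      show |(9:ℝ)| = 9 from abs_of_nonneg (by norm_num)]
    obtain ⟨q0, q1⟩ := unit_prod (abs_nonneg (bb p)) hb (hcn 2) (hcp 2)
    obtain ⟨r0, r1⟩ := unit_prod q0 q1 (han 2) (hap 2)
    linarith
  have t3 : |9*(cc p)^2*a*W0 p x a/(sg p a)^4| ≤ 9*|W0 p x a| := by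
    apply frac_bound ?_ (one_le_pow₀ hs1)
    rw [abs_mul, abs_mul, abs_mul, abs_of_nonneg (hcn 2), abs_of_nonneg ha0,
      show |(9:ℝ)| = 9 from abs_of_nonneg (by norm_num)]
    obtain ⟨q0, q1⟩ := unit_prod (hcn 2) (hcp 2) ha0 ha1
    nlinarith
  have t4 : |15*(cc p)^3*a^3*W0 p x a/(sg p a)^6| ≤ 15*|W0 p x a| := by
    apply frac_bound ?_ (one_le_pow₀ hs1)
    rw [abs_mul, abs_mul, abs_mul, abs_of_nonneg (hcn 3), abs_of_nonneg (han 3),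
      show |(15:ℝ)| = 15 from abs_of_nonneg (by norm_num)]
    obtain ⟨q0, q1⟩ := unit_prod (hcn 3) (hcp 3) (han 3) (hap 3)
    nlinarith
  refine le_trans (abs_sub_le' _ _) ?_
  refine le_trans (add_le_add_left (abs_add_le _ _) _) ?_
  refine le_trans (add_le_add_left (add_le_add_left (abs_sub_le' _ _) _) _) ?_
  linarith

lemma W4_bound : |W4 p x a| ≤ 96 + 204*|W0 p x a| := by
  have hb := bb_abs_le hp; have hc0 := cc_nonneg hp; have hc1 := cc_le_one hp
  obtain ⟨ha0, ha1⟩ := ha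
  have hs1 := sg_one_le hc0 a
  have hm : (0:ℝ) ≤ |W0 p x a| := abs_nonneg _
  have hcp : ∀ k : ℕ, (cc p)^k ≤ 1 := fun k => pow_le_one₀ hc0 hc1
  have hap : ∀ k : ℕ, a^k ≤ 1 := fun k => pow_le_one₀ ha0 ha1
  have hcn : ∀ k : ℕ, (0:ℝ) ≤ (cc p)^k := fun k => pow_nonneg hc0 k
  have han : ∀ k : ℕ, (0:ℝ) ≤ a^k := fun k => pow_nonneg ha0 k
  rw [W4_eq hc0]
  have t1 : |(-(36*bb p*(cc p)^2*a))/(sg p a)^5| ≤ 36 := by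
    rw [neg_div, abs_neg]
    apply frac_bound ?_ (one_le_pow₀ hs1)
    rw [abs_mul, abs_mul, abs_mul, abs_of_nonneg (hcn 2), abs_of_nonneg ha0,
      show |(36:ℝ)| = 36 from abs_of_nonneg (by norm_num)]
    obtain ⟨q0, q1⟩ := unit_prod (abs_nonneg (bb p)) hb (hcn 2) (hcp 2)
    obtain ⟨r0, r1⟩ := unit_prod q0 q1 ha0 ha1
    linarith
  have t2 : |60*bb p*(cc p)^3*a^3/(sg p a)^7| ≤ 60 := by
    apply frac_bound ?_ (one_le_pow₀ hs1)
    rw [abs_mul, abs_mul, abs_mul, abs_of_nonneg (hcn 3), abs_of_nonneg (han 3),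
      show |(60:ℝ)| = 60 from abs_of_nonneg (by norm_num)]
    obtain ⟨q0, q1⟩ := unit_prod (abs_nonneg (bb p)) hb (hcn 3) (hcp 3)
    obtain ⟨r0, r1⟩ := unit_prod q0 q1 (han 3) (hap 3)
    linarith
  have t3 : |9*(cc p)^2*W0 p x a/(sg p a)^4| ≤ 9*|W0 p x a| := by
    apply frac_bound ?_ (one_le_pow₀ hs1)
    rw [abs_mul, abs_mul, abs_of_nonneg (hcn 2),
      show |(9:ℝ)| = 9 from abs_of_nonneg (by norm_num)]
    nlinarith [hcn 2, hcp 2]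
  have t4 : |90*(cc p)^3*a^2*W0 p x a/(sg p a)^6| ≤ 90*|W0 p x a| := by
    apply frac_bound ?_ (one_le_pow₀ hs1)
    rw [abs_mul, abs_mul, abs_mul, abs_of_nonneg (hcn 3), abs_of_nonneg (han 2),
      show |(90:ℝ)| = 90 from abs_of_nonneg (by norm_num)]
    obtain ⟨q0, q1⟩ := unit_prod (hcn 3) (hcp 3) (han 2) (hap 2)
    nlinarith
  have t5 : |105*(cc p)^4*a^4*W0 p x a/(sg p a)^8| ≤ 105*|W0 p x a| := by
    apply frac_bound ?_ (one_le_pow₀ hs1)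
    rw [abs_mul, abs_mul, abs_mul, abs_of_nonneg (hcn 4), abs_of_nonneg (han 4),
      show |(105:ℝ)| = 105 from abs_of_nonneg (by norm_num)]
    obtain ⟨q0, q1⟩ := unit_prod (hcn 4) (hcp 4) (han 4) (hap 4)
    nlinarith
  refine le_trans (abs_add_le _ _) ?_
  refine le_trans (add_le_add_left (abs_sub_le' _ _) _) ?_
  refine le_trans (add_le_add_left (add_le_add_left (abs_add_le _ _) _) _) ?_
  refine le_trans (add_le_add_left (add_le_add_left (add_le_add_left (abs_add_le _ _) _) _) _) ?_
  linarith

end Wbounds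

lemma gauss_combo {g m : ℝ} (hm : 0 ≤ m) (hg : 0 ≤ g)
    (P : ∀ k : ℕ, k ≤ 8 → m^k * g ≤ 2048) :
    (3*m+m^3)*g*(1+m)^4 + 6*(m^2+1)*g*(1+m)^2*(2+4*m)
    + 3*m*g*(2+4*m)^2 + 4*m*g*(1+m)*(12+24*m)
    + g*(96+204*m) ≤ 2500000 := by
  have P0 := P 0 (by norm_num)
  have P1 := P 1 (by norm_num)
  have P2 := P 2 (by norm_num)
  have P3 := P 3 (by norm_num)
  have P4 := P 4 (by norm_num)
  have P5 := P 5 (by norm_num)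
  have P6 := P 6 (by norm_num)
  have P7 := P 7 (by norm_num)
  nlinarith [P0, P1, P2, P3, P4, P5, P6, P7, hm, hg]

lemma side_bound {p : ℝ} (hp0 : 0 ≤ p) (hp1 : p ≤ 1) (t : ℝ) :
    |p*t*(t^2-3)*gpdf t| ≤ 8192 := by
  have hg : (0:ℝ) ≤ gpdf t := (gpdf_pos t).le
  have hm : (0:ℝ) ≤ |t| := abs_nonneg t
  have e1 : |p*t*(t^2-3)*gpdf t| = p * |t| * |t^2-3| * gpdf t := by
    rw [abs_mul, abs_mul, abs_mul, abs_of_nonneg hp0, abs_of_nonneg hg]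
  have e2 : |t^2-3| ≤ |t|^2 + 3 := by
    refine le_trans (abs_sub_le' _ _) ?_
    rw [show |t^2| = |t|^2 by rw [← abs_pow]]
    norm_num
  have P1 := gpdf_poly_bound t 1 (by norm_num)
  have P3 := gpdf_poly_bound t 3 (by norm_num)
  rw [e1]
  have h5 : p * |t| * |t^2-3| * gpdf t ≤ |t| * |t^2-3| * gpdf t := by
    nlinarith [mul_nonneg (mul_nonneg hm (abs_nonneg (t^2-3))) hg]
  have h6 : |t| * |t^2-3| * gpdf t ≤ |t| * (|t|^2+3) * gpdf t := by gcongr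
  have h7 : |t| * (|t|^2+3) * gpdf t = |t|^3 * gpdf t + 3 * (|t|^1 * gpdf t) := by ring
  linarith

lemma F4_bound {p x a : ℝ} (hp : p ∈ Set.Icc (0:ℝ) 1) (ha : a ∈ Set.Icc (0:ℝ) 1) :
    |F4 p x a| ≤ 2600000 := by
  obtain ⟨hp0, hp1⟩ := hp
  have hg : (0:ℝ) ≤ gpdf (W0 p x a) := (gpdf_pos _).le
  set m := |W0 p x a| with hm_def
  have hm : (0:ℝ) ≤ m := abs_nonneg _
  have hb1 : |W1 p x a| ≤ 1 + m := W1_bound ⟨hp0, hp1⟩ ha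
  have hb2 : |W2 p x a| ≤ 2 + 4*m := W2_bound ⟨hp0, hp1⟩ ha
  have hb3 : |W3 p x a| ≤ 12 + 24*m := W3_bound ⟨hp0, hp1⟩ ha
  have hb4 : |W4 p x a| ≤ 96 + 204*m := W4_bound ⟨hp0, hp1⟩ ha
  have s1 : |p*(x-a)*((x-a)^2-3)*gpdf (x-a)| ≤ 8192 := side_bound hp0 hp1 _
  have s2 : |(1-p)*(x+a)*((x+a)^2-3)*gpdf (x+a)| ≤ 8192 :=
    side_bound (by linarith) (by linarith) _
  -- bound the five composite terms
  have t1 : |(3*W0 p x a - (W0 p x a)^3)*gpdf (W0 p x a)*(W1 p x a)^4|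
      ≤ (3*m+m^3)*gpdf (W0 p x a)*(1+m)^4 := by
    rw [abs_mul, abs_mul, abs_pow, abs_of_nonneg hg]
    have h1 : |3*W0 p x a - (W0 p x a)^3| ≤ 3*m + m^3 := by
      refine le_trans (abs_sub_le' _ _) ?_
      rw [abs_mul, ← abs_pow]
      simp [hm_def]
    gcongr
  have t2 : |6*((W0 p x a)^2-1)*gpdf (W0 p x a)*(W1 p x a)^2*W2 p x a|
      ≤ 6*(m^2+1)*gpdf (W0 p x a)*(1+m)^2*(2+4*m) := by
    rw [abs_mul, abs_mul, abs_mul, abs_pow, abs_of_nonneg hg]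
    have h1 : |6*((W0 p x a)^2-1)| ≤ 6*(m^2+1) := by
      rw [abs_mul, show |(6:ℝ)| = 6 from abs_of_nonneg (by norm_num)]
      have h := abs_sub_le' ((W0 p x a)^2) 1
      rw [abs_pow, abs_one] at h
      linarith
    gcongr <;> positivity
  have t3 : |3*W0 p x a*gpdf (W0 p x a)*(W2 p x a)^2|
      ≤ 3*m*gpdf (W0 p x a)*(2+4*m)^2 := by
    rw [abs_mul, abs_mul, abs_pow, abs_of_nonneg hg, abs_mul,
      show |(3:ℝ)| = 3 from abs_of_nonneg (by norm_num)]
    gcongr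
  have t4 : |4*W0 p x a*gpdf (W0 p x a)*W1 p x a*W3 p x a|
      ≤ 4*m*gpdf (W0 p x a)*(1+m)*(12+24*m) := by
    rw [abs_mul, abs_mul, abs_mul, abs_of_nonneg hg, abs_mul,
      show |(4:ℝ)| = 4 from abs_of_nonneg (by norm_num)]
    gcongr
  have t5 : |gpdf (W0 p x a)*W4 p x a| ≤ gpdf (W0 p x a)*(96+204*m) := by
    rw [abs_mul, abs_of_nonneg hg]
    gcongr
  have combo := gauss_combo hm hg (fun k hk => by
    rw [hm_def]; exact gpdf_poly_bound (W0 p x a) k hk)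
  unfold F4
  -- triangle inequality across everything
  refine le_trans (abs_sub_le' _ _) ?_
  refine le_trans (add_le_add_left (abs_sub_le' _ _) _) ?_
  have hS : |(3*W0 p x a - (W0 p x a)^3)*gpdf (W0 p x a)*(W1 p x a)^4
      + 6*((W0 p x a)^2-1)*gpdf (W0 p x a)*(W1 p x a)^2*W2 p x a
      - 3*W0 p x a*gpdf (W0 p x a)*(W2 p x a)^2
      - 4*W0 p x a*gpdf (W0 p x a)*W1 p x a*W3 p x a
      + gpdf (W0 p x a)*W4 p x a| ≤ 2500000 := by
    refine le_trans (abs_add_le _ _) ?_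
    refine le_trans (add_le_add_left (abs_sub_le' _ _) _) ?_
    refine le_trans (add_le_add_left (add_le_add_left (abs_sub_le' _ _) _) _) ?_
    refine le_trans (add_le_add_left (add_le_add_left (add_le_add_left (abs_add_le _ _) _) _) _) ?_
    linarith
  have habs : |-(p*(x-a)*((x-a)^2-3)*gpdf (x-a))| = |p*(x-a)*((x-a)^2-3)*gpdf (x-a)| :=
    abs_neg _
  rw [habs]
  linarith

lemma cascade {g g' : ℝ → ℝ} {K : ℝ} {n : ℕ}
    (hd : ∀ t, HasDerivAt g (g' t) t) (h0 : g 0 = 0)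
    (hb : ∀ t ∈ Set.Icc (0:ℝ) 1, |g' t| ≤ K * t^n) :
    ∀ t ∈ Set.Icc (0:ℝ) 1, |g t| ≤ K * t^(n+1) := by
  intro t ht
  have hK : 0 ≤ K * t^n := le_trans (abs_nonneg _) (hb t ht)
  have h := Convex.norm_image_sub_le_of_norm_hasDerivWithin_le
    (f := g) (f' := g') (s := Set.Icc 0 t) (C := K * t^n)
    (fun u _ => (hd u).hasDerivWithinAt)
    (fun u hu => by
      have h1 : |g' u| ≤ K * u^n := hb u ⟨hu.1, le_trans hu.2 ht.2⟩
      have h2 : u^n ≤ t^n := pow_le_pow_left₀ hu.1 hu.2 n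
      have h3 : K * u^n ≤ K * t^n := by
        rcases le_or_gt 0 K with hK0 | hK0
        · exact mul_le_mul_of_nonneg_left h2 hK0
        · nlinarith [pow_nonneg hu.1 n, pow_nonneg (le_trans hu.1 hu.2) n,
            hb u ⟨hu.1, le_trans hu.2 ht.2⟩, abs_nonneg (g' u)]
      exact le_trans h1 h3)
    (convex_Icc 0 t) (Set.left_mem_Icc.2 ht.1) (Set.right_mem_Icc.2 ht.1)
  rw [h0, sub_zero, sub_zero] at h
  have ht0 : ‖t‖ = t := by rw [Real.norm_eq_abs, abs_of_nonneg ht.1]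
  rw [ht0] at h
  calc |g t| = ‖g t‖ := rfl
    _ ≤ K * t^n * t := h
    _ = K * t^(n+1) := by ring

lemma key_estimate {p : ℝ} (hp : p ∈ Set.Icc (0:ℝ) 1) (x : ℝ) :
    ∀ a ∈ Set.Icc (0:ℝ) 1,
      |FF p x a - 8*p*(1-p)*(2*p-1)*((x^2-1)*gpdf x) * a^3/6| ≤ 2600000 * a^4 := by
  have hc : 0 ≤ cc p := cc_nonneg hp
  set L := 8*p*(1-p)*(2*p-1)*((x^2-1)*gpdf x) with hL
  have c3 : ∀ t ∈ Set.Icc (0:ℝ) 1, |F3 p x t - L| ≤ 2600000 * t^1 := by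
    apply cascade (g' := fun t => F4 p x t)
    · exact fun t => (hasDerivAt_F3 (x := x) hc t).sub_const L
    · rw [F3_zero, hL]; ring
    · intro t ht
      simpa using F4_bound hp ht
  have c2 : ∀ t ∈ Set.Icc (0:ℝ) 1, |F2 p x t - L*t| ≤ 2600000 * t^2 := by
    apply cascade (g' := fun t => F3 p x t - L)
    · intro t
      have := (hasDerivAt_F2 (x := x) hc t).sub ((hasDerivAt_id t).const_mul L)
      exact this.congr_deriv (by ring)
    · rw [F2_zero]; ring
    · exact c3
  have c1 : ∀ t ∈ Set.Icc (0:ℝ) 1, |F1 p x t - L*t^2/2| ≤ 2600000 * t^3 := by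
    apply cascade (g' := fun t => F2 p x t - L*t)
    · intro t
      have h2 : HasDerivAt (fun t : ℝ => L*t^2/2) (L*t) t := by
        have := ((hasDerivAt_pow 2 t).const_mul L).div_const 2
        refine this.congr_deriv ?_
        simp; ring
      exact (hasDerivAt_F1 (x := x) hc t).sub h2
    · rw [F1_zero]; ring
    · exact c2
  have c0 : ∀ t ∈ Set.Icc (0:ℝ) 1, |FF p x t - L*t^3/6| ≤ 2600000 * t^4 := by
    apply cascade (g' := fun t => F1 p x t - L*t^2/2)
    · intro t
      have h2 : HasDerivAt (fun t : ℝ => L*t^3/6) (L*t^2/2) t := by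
        have := ((hasDerivAt_pow 3 t).const_mul L).div_const 6
        refine this.congr_deriv ?_
        simp; ring
      exact (hasDerivAt_FF (x := x) hc t).sub h2
    · rw [FF_zero]; ring
    · exact c1
  intro a ha
  exact c0 a ha


noncomputable def cfun (p : ℝ) : ℝ := |8*p*(1-p)*(2*p-1)| * gpdf 0 / 6

lemma psi2_bound (x : ℝ) : |x^2-1| * gpdf x ≤ gpdf 0 := by
  have hs : (0:ℝ) < Real.sqrt (2*Real.pi) := by positivity
  have key : |x^2-1| ≤ Real.exp (x^2/2) := by
    have he : (1 + x^2/4)^2 ≤ Real.exp (x^2/2) := by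
      have h1 := Real.add_one_le_exp (x^2/4)
      calc (1 + x^2/4)^2 ≤ (Real.exp (x^2/4))^2 := by
            apply pow_le_pow_left₀ (by positivity) (by linarith)
        _ = Real.exp (x^2/2) := by rw [← Real.exp_nat_mul]; ring_nf
    rw [abs_le]
    constructor <;> nlinarith [sq_nonneg x, sq_nonneg (x^2-4), sq_nonneg (x^2)]
  have h2 : |x^2-1| * Real.exp (-x^2/2) ≤ 1 := by
    have h3 : Real.exp (x^2/2) * Real.exp (-x^2/2) = 1 := by
      rw [← Real.exp_add, show x^2/2 + -x^2/2 = 0 by ring, Real.exp_zero]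
    nlinarith [Real.exp_pos (-x^2/2), abs_nonneg (x^2-1)]
  unfold gpdf
  rw [show -(0:ℝ)^2/2 = 0 by norm_num, Real.exp_zero]
  rw [← mul_div_assoc]
  rw [div_le_div_iff₀ hs hs]
  nlinarith [h2, hs]

lemma FF_abs_le {p : ℝ} (hp : p ∈ Set.Icc (0:ℝ) 1) (x a : ℝ) : |FF p x a| ≤ 2 := by
  obtain ⟨hp0, hp1⟩ := hp
  unfold FF
  have h1 := cdf_nonneg (x-a); have h2 := cdf_le_one (x-a)
  have h3 := cdf_nonneg (x+a); have h4 := cdf_le_one (x+a)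
  have h5 := cdf_nonneg (W0 p x a); have h6 := cdf_le_one (W0 p x a)
  rw [abs_le]
  constructor <;> nlinarith

lemma mixture_eq (p a : ℝ) : mixtureKSdist p a = ⨆ x : ℝ, |FF p x a| := rfl

lemma L_abs_le {p : ℝ} (hp : p ∈ Set.Icc (0:ℝ) 1) (x : ℝ) :
    |8*p*(1-p)*(2*p-1)*((x^2-1)*gpdf x)| ≤ 6 * cfun p := by
  rw [abs_mul]
  unfold cfun
  have h1 : |(x^2-1)*gpdf x| ≤ gpdf 0 := by
    rw [abs_mul, abs_of_pos (gpdf_pos x)]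
    exact psi2_bound x
  have h2 : (0:ℝ) ≤ |8*p*(1-p)*(2*p-1)| := abs_nonneg _
  calc |8*p*(1-p)*(2*p-1)| * |(x^2-1)*gpdf x| ≤ |8*p*(1-p)*(2*p-1)| * gpdf 0 :=
        mul_le_mul_of_nonneg_left h1 h2
    _ = 6 * (|8*p*(1-p)*(2*p-1)| * gpdf 0 / 6) := by ring

lemma L_abs_at_zero {p : ℝ} :
    |8*p*(1-p)*(2*p-1)*(((0:ℝ)^2-1)*gpdf 0)| = 6 * cfun p := by
  unfold cfun
  rw [show ((0:ℝ)^2-1)*gpdf 0 = -(gpdf 0) by ring, abs_mul, abs_neg,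
    abs_of_pos (gpdf_pos 0)]
  ring

lemma upper_bound {p : ℝ} (hp : p ∈ Set.Icc (0:ℝ) 1) {a : ℝ} (ha : a ∈ Set.Ioo (0:ℝ) 1) :
    mixtureKSdist p a ≤ cfun p * a^3 + 2600000*a^4 := by
  rw [mixture_eq]
  apply ciSup_le
  intro x
  have k := key_estimate hp x a ⟨ha.1.le, ha.2.le⟩
  have hL := L_abs_le hp x
  have ha3 : (0:ℝ) ≤ a^3 := pow_nonneg ha.1.le 3
  have tri : |FF p x a| ≤ |FF p x a - 8*p*(1-p)*(2*p-1)*((x^2-1)*gpdf x) * a^3/6|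
      + |8*p*(1-p)*(2*p-1)*((x^2-1)*gpdf x) * a^3/6| := by
    have := abs_add_le (FF p x a - 8*p*(1-p)*(2*p-1)*((x^2-1)*gpdf x) * a^3/6)
      (8*p*(1-p)*(2*p-1)*((x^2-1)*gpdf x) * a^3/6)
    simpa using this
  have h2 : |8*p*(1-p)*(2*p-1)*((x^2-1)*gpdf x) * a^3/6| ≤ cfun p * a^3 := by
    rw [abs_div, abs_mul, abs_of_nonneg ha3, show |(6:ℝ)| = 6 by norm_num]
    rw [div_le_iff₀ (by norm_num : (0:ℝ) < 6)]
    calc |8*p*(1-p)*(2*p-1)*((x^2-1)*gpdf x)| * a^3 ≤ (6 * cfun p) * a^3 := by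
          apply mul_le_mul_of_nonneg_right hL ha3
      _ = cfun p * a^3 * 6 := by ring
  linarith

lemma lower_bound {p : ℝ} (hp : p ∈ Set.Icc (0:ℝ) 1) {a : ℝ} (ha : a ∈ Set.Ioo (0:ℝ) 1) :
    cfun p * a^3 - 2600000*a^4 ≤ mixtureKSdist p a := by
  rw [mixture_eq]
  have hbdd : BddAbove (Set.range fun x => |FF p x a|) :=
    ⟨2, by rintro _ ⟨x, rfl⟩; exact FF_abs_le hp x a⟩
  have hle : |FF p 0 a| ≤ ⨆ x : ℝ, |FF p x a| := le_ciSup hbdd 0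
  have k := key_estimate hp 0 a ⟨ha.1.le, ha.2.le⟩
  have ha3 : (0:ℝ) ≤ a^3 := pow_nonneg ha.1.le 3
  have h2 : |8*p*(1-p)*(2*p-1)*(((0:ℝ)^2-1)*gpdf 0) * a^3/6| = cfun p * a^3 := by
    rw [abs_div, abs_mul, abs_of_nonneg ha3, show |(6:ℝ)| = 6 by norm_num,
      L_abs_at_zero]
    ring
  have tri : |8*p*(1-p)*(2*p-1)*(((0:ℝ)^2-1)*gpdf 0) * a^3/6| - |FF p 0 a -
      8*p*(1-p)*(2*p-1)*(((0:ℝ)^2-1)*gpdf 0) * a^3/6| ≤ |FF p 0 a| := by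
    have h := abs_sub_le' (8*p*(1-p)*(2*p-1)*(((0:ℝ)^2-1)*gpdf 0) * a^3/6) (FF p 0 a)
    have h4 : |8*p*(1-p)*(2*p-1)*(((0:ℝ)^2-1)*gpdf 0) * a^3/6|
        ≤ |8*p*(1-p)*(2*p-1)*(((0:ℝ)^2-1)*gpdf 0) * a^3/6 - FF p 0 a| + |FF p 0 a| := by
      have := abs_add_le (8*p*(1-p)*(2*p-1)*(((0:ℝ)^2-1)*gpdf 0) * a^3/6 - FF p 0 a) (FF p 0 a)
      simpa using this
    have h5 : |8*p*(1-p)*(2*p-1)*(((0:ℝ)^2-1)*gpdf 0) * a^3/6 - FF p 0 a|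
        = |FF p 0 a - 8*p*(1-p)*(2*p-1)*(((0:ℝ)^2-1)*gpdf 0) * a^3/6| := abs_sub_comm _ _
    rw [h5] at h4
    linarith
  rw [h2] at tri
  linarith

lemma limit_part {p : ℝ} (hp : p ∈ Set.Icc (0:ℝ) 1) :
    Tendsto (fun a : ℝ => mixtureKSdist p a / a ^ 3)
      (nhdsWithin 0 (Set.Ioi 0)) (nhds (cfun p)) := by
  have ev : ∀ᶠ a in nhdsWithin (0:ℝ) (Set.Ioi 0),
      ‖mixtureKSdist p a / a^3 - cfun p‖ ≤ 2600000 * a := by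
    filter_upwards [Ioo_mem_nhdsGT_of_mem
      (by norm_num : (0:ℝ) ∈ Set.Ico (0:ℝ) 1)] with a ha
    have h3 : (0:ℝ) < a^3 := pow_pos ha.1 3
    have hu := upper_bound hp ha
    have hl := lower_bound hp ha
    have e : mixtureKSdist p a / a^3 - cfun p
        = (mixtureKSdist p a - cfun p * a^3)/a^3 := by rw [sub_div, mul_div_cancel_right₀ _ h3.ne']
    rw [Real.norm_eq_abs, e, abs_div, abs_of_pos h3, div_le_iff₀ h3]
    rw [abs_le]
    constructor <;> nlinarith
  have t1 : Tendsto (fun a : ℝ => 2600000 * a) (nhdsWithin 0 (Set.Ioi 0)) (nhds 0) := by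
    have : Tendsto (fun a : ℝ => 2600000 * a) (nhds 0) (nhds 0) := by
      have h := ((continuous_const (y := (2600000:ℝ))).mul continuous_id).tendsto (0:ℝ)
      simpa [Pi.mul_def] using h
    exact this.mono_left nhdsWithin_le_nhds
  have h0 : Tendsto (fun a => mixtureKSdist p a / a^3 - cfun p)
      (nhdsWithin 0 (Set.Ioi 0)) (nhds 0) := squeeze_zero_norm' ev t1
  have := h0.add_const (cfun p)
  simpa using this

lemma max_part {p : ℝ} (hp : p ∈ Set.Icc (0:ℝ) 1) :
    cfun p ≤ cfun ((3 + Real.sqrt 3) / 6) := by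
  obtain ⟨hp0, hp1⟩ := hp
  set s := Real.sqrt 3 with hs
  have h3 : s^2 = 3 := Real.sq_sqrt (by norm_num)
  have hs0 : 0 ≤ s := Real.sqrt_nonneg 3
  have hval : 8*((3+s)/6)*(1-(3+s)/6)*(2*((3+s)/6)-1) = 4*s/9 := by
    field_simp
    nlinarith [h3]
  have habs : |8*((3+s)/6)*(1-(3+s)/6)*(2*((3+s)/6)-1)| = 4*s/9 := by
    rw [hval, abs_of_nonneg (by positivity)]
  have hsq : (p*(1-p)*(2*p-1))^2 ≤ 1/108 := by
    nlinarith [mul_nonneg (sq_nonneg (p*(1-p) - 1/6))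
      (show (0:ℝ) ≤ p*(1-p) + 1/12 by nlinarith), sq_nonneg (2*p-1)]
  have hineq : |8*p*(1-p)*(2*p-1)| ≤ 4*s/9 := by
    rw [abs_le]
    constructor <;> nlinarith [hsq, h3, hs0]
  unfold cfun
  rw [habs]
  have hg := (gpdf_pos 0).le
  apply div_le_div_of_nonneg_right ?_ (by norm_num)
  · exact mul_le_mul_of_nonneg_right hineq hg


theorem worst_case_line_ratio :
    ∃ c : ℝ → ℝ,
      (∀ p ∈ Set.Icc (0 : ℝ) 1,
        Tendsto (fun a : ℝ => mixtureKSdist p a / a ^ 3)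
          (nhdsWithin 0 (Set.Ioi 0)) (nhds (c p))) ∧
      ∀ p ∈ Set.Icc (0 : ℝ) 1, c p ≤ c ((3 + Real.sqrt 3) / 6) := by
  exact ⟨cfun, fun p hp => limit_part hp, fun p hp => max_part hp⟩

end
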